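/- No language accepted by a weak deterministic Büchi automaton has the dense oscillating sequence property: if L ⊆ Σ^ω is accepted by a deterministic weak automaton, then there is no sequence w₁, w₂, … with d(w_i, w_{i+1}) arbitrarily small at each step (chosen adaptively), w_i ∈ L for odd i and w_i ∉ L for even i. -/

import Mathlib

/-- A deterministic Büchi automaton on infinite words. -/
structure DBA (A Q : Type*) where
  delta : Q → A → Q
  init : Q
  acc : Set Q

/-- The unique run of a deterministic automaton on an infinite word. -/
def DBA.run {A Q : Type*} (M : DBA A Q) (w : ℕ → A) : ℕ → Q
  | 0 => M.init
  | n + 1 => M.delta (M.run w n) (w n)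

/-- The ω-language accepted by the deterministic Büchi automaton: the unique
run visits the accepting set infinitely often. -/
def DBA.Lang {A Q : Type*} (M : DBA A Q) : Set (ℕ → A) :=
  {w | {n | M.run w n ∈ M.acc}.Infinite}

/-- A deterministic automaton is weak: its state set partitions into
components (fibers of `c`) each entirely accepting or entirely
non-accepting, with a partial order on components such that transitions are
non-increasing. -/
def DBA.IsWeak {A Q : Type*} (M : DBA A Q) : Prop :=
  ∃ (ι : Type) (_ : PartialOrder ι) (c : Q → ι),
    (∀ q q', c q = c q' → (q ∈ M.acc ↔ q' ∈ M.acc)) ∧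
    (∀ q a, c (M.delta q a) ≤ c q)

/-- Length of the longest common prefix of two distinct infinite words. -/
noncomputable def commonLen {A : Type*} (w w' : ℕ → A) : ℕ :=
  sInf {n | w n ≠ w' n}

/-- The prefix distance on infinite words. -/
noncomputable def wdist {A : Type*} (w w' : ℕ → A) : ℝ :=
  letI := Classical.propDecidable (w = w')
  if w = w' then 0 else 1 / (commonLen w w' + 1)

/-- The dense oscillating sequence property for `L ⊆ Σ^ω`:
`∃w₁ ∀ε₁ ∃w₂ ∀ε₂ …` via an adaptive strategy `f` with
`f [ε₁,…,ε_k] = w_{k+1}`, `w₁ ∈ L`, `d(w_i,w_{i+1}) ≤ ε_i`, membership in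
`L` exactly for odd indices. -/
def DenseOsc {A : Type*} (L : Set (ℕ → A)) : Prop :=
  ∃ f : List ℝ → (ℕ → A),
    f [] ∈ L ∧
    ∀ εs : List ℝ, (∀ x ∈ εs, 0 < x) → ∀ ε : ℝ, 0 < ε →
      wdist (f εs) (f (εs ++ [ε])) ≤ ε ∧
      (f (εs ++ [ε]) ∈ L ↔ Odd εs.length)

section Aux

variable {A Q : Type*} (M : DBA A Q)

/-- Runs on words agreeing on a prefix agree on that prefix. -/
lemma DBA.run_agree {w w' : ℕ → A} {n : ℕ} (h : ∀ k < n, w k = w' k) :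
    ∀ k ≤ n, M.run w k = M.run w' k := by
  intro k hk
  induction k with
  | zero => rfl
  | succ k ih =>
    have hk' : k < n := lt_of_lt_of_le (Nat.lt_succ_self k) hk
    simp only [DBA.run, ih hk'.le, h k hk']

variable {ι : Type} [PartialOrder ι] (c : Q → ι)

lemma DBA.run_anti (hc2 : ∀ q a, c (M.delta q a) ≤ c q) (w : ℕ → A) :
    Antitone fun n => c (M.run w n) :=
  antitone_nat_of_succ_le fun n => hc2 _ _

lemma DBA.exists_stab [Finite Q] (hc2 : ∀ q a, c (M.delta q a) ≤ c q) (w : ℕ → A) :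
    ∃ N, ∀ n ≥ N, c (M.run w n) = c (M.run w N) := by
  have hfin : (Set.range fun n => c (M.run w n)).Finite :=
    (Set.finite_range c).subset (by rintro x ⟨n, rfl⟩; exact ⟨_, rfl⟩)
  obtain ⟨x, ⟨N, rfl⟩, hmin⟩ :=
    Set.Finite.exists_minimalFor id _ hfin ⟨_, ⟨0, rfl⟩⟩
  exact ⟨N, fun n hn => le_antisymm (M.run_anti c hc2 w hn) (hmin ⟨n, rfl⟩ (M.run_anti c hc2 w hn))⟩

lemma DBA.mem_lang_iff (hc1 : ∀ q q', c q = c q' → (q ∈ M.acc ↔ q' ∈ M.acc))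
    {w : ℕ → A} {N : ℕ} (hN : ∀ n ≥ N, c (M.run w n) = c (M.run w N)) :
    w ∈ M.Lang ↔ M.run w N ∈ M.acc := by
  constructor
  · intro h
    obtain ⟨n, hn, hnN⟩ := h.exists_gt N
    exact (hc1 _ _ (hN n hnN.le)).mp hn
  · intro h
    refine Set.Infinite.mono (fun n hn => ?_) (Set.Ici_infinite N)
    exact (hc1 _ _ (hN n hn)).mpr h

end Aux

lemma agree_of_wdist_le {A : Type*} {w w' : ℕ → A} {n : ℕ}
    (h : wdist w w' ≤ 1 / (n + 1)) : ∀ k < n, w k = w' k := by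
  intro k hk
  by_cases he : w = w'
  · rw [he]
  · unfold wdist at h
    rw [if_neg he] at h
    have h1 : (0 : ℝ) < (commonLen w w' : ℝ) + 1 := by positivity
    have h2 : (n : ℝ) + 1 ≤ (commonLen w w' : ℝ) + 1 := by
      rw [div_le_div_iff₀ h1 (by positivity)] at h
      linarith
    have hcl : n ≤ commonLen w w' := by exact_mod_cast (by linarith : (n : ℝ) ≤ commonLen w w')
    by_contra hne
    have := Nat.sInf_le (show k ∈ {m | w m ≠ w' m} from hne)
    unfold commonLen at hcl
    omega

/-- No language accepted by a weak deterministic Büchi automaton has the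
dense oscillating sequence property. -/
theorem weak_deterministic_not_denseOsc {A Q : Type*} [Finite Q]
    (M : DBA A Q) (hW : M.IsWeak) :
    ¬ DenseOsc M.Lang := by
  rintro ⟨f, hf0, hf⟩
  obtain ⟨ι, _inst, c, hc1, hc2⟩ := hW
  set N : (ℕ → A) → ℕ := fun w => (M.exists_stab c hc2 w).choose with hNdef
  have hN : ∀ w, ∀ n ≥ N w, c (M.run w n) = c (M.run w (N w)) :=
    fun w => (M.exists_stab c hc2 w).choose_spec
  set εs : ℕ → List ℝ :=
    fun k => Nat.rec (motive := fun _ => List ℝ) [] (fun _ ih => ih ++ [1 / ((N (f ih) : ℝ) + 1)]) k with hεsdef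
  have hεs_succ : ∀ k, εs (k + 1) = εs k ++ [1 / ((N (f (εs k)) : ℝ) + 1)] := fun k => rfl
  have hpos : ∀ k, ∀ x ∈ εs k, 0 < x := by
    intro k
    induction k with
    | zero => simp [hεsdef]
    | succ k ih =>
      rw [hεs_succ]
      intro x hx
      rcases List.mem_append.mp hx with hx | hx
      · exact ih x hx
      · rw [List.mem_singleton.mp hx]; positivity
  have hlen : ∀ k, (εs k).length = k := by
    intro k
    induction k with
    | zero => rfl
    | succ k ih => rw [hεs_succ]; simp [ih]
  set w : ℕ → (ℕ → A) := fun k => f (εs k) with hwdef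
  have key : ∀ k, wdist (w k) (w (k + 1)) ≤ 1 / (N (w k) + 1) ∧
      (w (k + 1) ∈ M.Lang ↔ Odd k) := by
    intro k
    have h := hf (εs k) (hpos k) (1 / ((N (f (εs k)) : ℝ) + 1)) (by positivity)
    rw [hlen k] at h
    exact h
  have hmem : ∀ k, w k ∈ M.Lang ↔ Even k := by
    intro k
    cases k with
    | zero => exact iff_of_true hf0 ⟨0, rfl⟩
    | succ k =>
      rw [(key k).2, Nat.even_add_one, Nat.not_even_iff_odd]
  set e : ℕ → ι := fun k => c (M.run (w k) (N (w k))) with hedef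
  have hstrict : ∀ k, e (k + 1) < e k := by
    intro k
    have hag : ∀ j < N (w k), w k j = w (k + 1) j := agree_of_wdist_le (key k).1
    have hrun : M.run (w k) (N (w k)) = M.run (w (k + 1)) (N (w k)) :=
      M.run_agree hag _ le_rfl
    have hle : e (k + 1) ≤ e k := by
      calc e (k + 1) = c (M.run (w (k + 1)) (max (N (w k)) (N (w (k + 1))))) :=
            (hN (w (k + 1)) _ (le_max_right _ _)).symm
        _ ≤ c (M.run (w (k + 1)) (N (w k))) :=
            M.run_anti c hc2 (w (k + 1)) (le_max_left _ _)
        _ = e k := by rw [← hrun]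
    refine lt_of_le_of_ne hle fun heq => ?_
    have hacc : M.run (w (k + 1)) (N (w (k + 1))) ∈ M.acc ↔
        M.run (w k) (N (w k)) ∈ M.acc := hc1 _ _ heq
    have h1 := (M.mem_lang_iff c hc1 (hN (w k))).symm.trans (hmem k)
    have h2 := (M.mem_lang_iff c hc1 (hN (w (k + 1)))).symm.trans (hmem (k + 1))
    rw [hacc, h1, Nat.even_add_one] at h2
    tauto
  have hinj : Function.Injective e := (strictAnti_nat_of_succ_lt hstrict).injective
  have hinf : (Set.range e).Infinite := Set.infinite_range_of_injective hinj
  exact hinf ((Set.finite_range c).subset (by rintro x ⟨k, rfl⟩; exact ⟨_, rfl⟩))
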